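/- Define p*(α) = (2^α(3+α) − 4 − 2α)/(2 + 2^α(α−1)) for α ≥ 1. Then p* attains a global maximum on [1, ∞) at some α* ∈ (2, 3), and p*(α*) < 2.2. -/

import Mathlib

open Real

/-- The critical power `p*(α) = (2^α(3+α) − 4 − 2α)/(2 + 2^α(α−1))`. -/
noncomputable def pstar (α : ℝ) : ℝ :=
  ((2 : ℝ) ^ α * (3 + α) - 4 - 2 * α) / (2 + (2 : ℝ) ^ α * (α - 1))

lemma two_rpow_pos (x : ℝ) : 0 < (2:ℝ) ^ x := rpow_pos_of_pos two_pos x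

lemma den_pos {α : ℝ} (h : 1 ≤ α) : 0 < 2 + (2:ℝ) ^ α * (α - 1) := by
  have := two_rpow_pos α; nlinarith

/-- chord bound from convexity of `exp`. -/
lemma chord_bound {a b x : ℝ} (hax : a ≤ x) (hxb : x ≤ b) (hab : a < b) :
    (2:ℝ) ^ x * (b - a) ≤ (b - x) * (2:ℝ) ^ a + (x - a) * (2:ℝ) ^ b := by
  have hba : (0:ℝ) < b - a := by linarith
  set lam := (b - x) / (b - a) with hlam
  set mu := (x - a) / (b - a) with hmu
  have hlam0 : 0 ≤ lam := div_nonneg (by linarith) hba.le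
  have hmu0 : 0 ≤ mu := div_nonneg (by linarith) hba.le
  have hsum : lam + mu = 1 := by
    rw [hlam, hmu, ← add_div, div_eq_one_iff_eq hba.ne']
    ring
  have key := convexOn_exp.2 (Set.mem_univ (Real.log 2 * a)) (Set.mem_univ (Real.log 2 * b))
      hlam0 hmu0 hsum
  have harg : lam • (Real.log 2 * a) + mu • (Real.log 2 * b) = Real.log 2 * x := by
    rw [smul_eq_mul, smul_eq_mul, hlam, hmu]
    field_simp
    ring
  rw [harg] at key
  have ea : (2:ℝ) ^ a = Real.exp (Real.log 2 * a) := rpow_def_of_pos two_pos a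
  have eb : (2:ℝ) ^ b = Real.exp (Real.log 2 * b) := rpow_def_of_pos two_pos b
  have ex : (2:ℝ) ^ x = Real.exp (Real.log 2 * x) := rpow_def_of_pos two_pos x
  rw [ea, eb, ex]
  rw [smul_eq_mul, smul_eq_mul] at key
  have := mul_le_mul_of_nonneg_right key hba.le
  calc Real.exp (Real.log 2 * x) * (b - a)
      ≤ (lam * Real.exp (Real.log 2 * a) + mu * Real.exp (Real.log 2 * b)) * (b - a) := this
    _ = (b - x) * Real.exp (Real.log 2 * a) + (x - a) * Real.exp (Real.log 2 * b) := by
        rw [hlam, hmu]; field_simp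

lemma rp_two : (2:ℝ) ^ (2:ℝ) = 4 := by norm_num
lemma rp_three : (2:ℝ) ^ (3:ℝ) = 8 := by norm_num
lemma rp_four : (2:ℝ) ^ (4:ℝ) = 16 := by norm_num
lemma rp_five : (2:ℝ) ^ (5:ℝ) = 32 := by norm_num

lemma pow4_rpow (c : ℝ) : ((2:ℝ) ^ c) ^ (4:ℕ) = (2:ℝ) ^ (c * 4) := by
  rw [← Real.rpow_natCast ((2:ℝ) ^ c) 4, ← Real.rpow_mul (by norm_num)]
  norm_num

lemma b325 : (2:ℝ) ^ (3.25:ℝ) ≤ 9.5137 := by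
  apply le_of_pow_le_pow_left₀ (n := 4) (by norm_num) (by norm_num)
  rw [pow4_rpow]
  norm_num

lemma b35 : (2:ℝ) ^ (3.5:ℝ) ≤ 11.3138 := by
  apply le_of_pow_le_pow_left₀ (n := 4) (by norm_num) (by norm_num)
  rw [pow4_rpow]
  norm_num

lemma b275 : (6.7268:ℝ) ≤ (2:ℝ) ^ (2.75:ℝ) := by
  apply le_of_pow_le_pow_left₀ (n := 4) (by norm_num) (two_rpow_pos _).le
  rw [pow4_rpow]
  norm_num

/-- key bound on [3,5]: `2^α (1023−223α) ≤ 1646+400α`. -/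
lemma claimA_aux {α : ℝ} (h3 : 3 ≤ α) (h5 : α ≤ 5) :
    (2:ℝ) ^ α * (1023 - 223 * α) ≤ 1646 + 400 * α := by
  rcases le_total α 3.25 with h | h
  · have hc := chord_bound h3 h (by norm_num : (3:ℝ) < 3.25)
    rw [rp_three] at hc
    have hb := b325
    have hm : (0:ℝ) ≤ 1023 - 223 * α := by linarith
    have hc' : (2:ℝ) ^ α * 0.25 ≤ (3.25 - α) * 8 + (α - 3) * 9.5137 := by nlinarith
    nlinarith [mul_le_mul_of_nonneg_right hc' hm, sq_nonneg (α - 3)]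
  rcases le_total α 3.5 with h' | h'
  · have hc := chord_bound h h' (by norm_num : (3.25:ℝ) < 3.5)
    have hb := b325; have hb' := b35
    have hm : (0:ℝ) ≤ 1023 - 223 * α := by linarith
    have hc' : (2:ℝ) ^ α * 0.25 ≤ (3.5 - α) * 9.5137 + (α - 3.25) * 11.3138 := by nlinarith
    nlinarith [mul_le_mul_of_nonneg_right hc' hm, sq_nonneg (α - 3.25)]
  rcases le_total α 4 with h'' | h''
  · have hc := chord_bound h' h'' (by norm_num : (3.5:ℝ) < 4)
    rw [rp_four] at hc
    have hb := b35
    have hm : (0:ℝ) ≤ 1023 - 223 * α := by linarith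
    have hc' : (2:ℝ) ^ α * 0.5 ≤ (4 - α) * 11.3138 + (α - 3.5) * 16 := by nlinarith
    nlinarith [mul_le_mul_of_nonneg_right hc' hm, sq_nonneg (α - 3.5)]
  · rcases le_total (1023 - 223 * α) 0 with hm | hm
    · have := two_rpow_pos α
      nlinarith
    · have hc := chord_bound h'' h5 (by norm_num : (4:ℝ) < 5)
      rw [rp_four, rp_five] at hc
      nlinarith [mul_le_mul_of_nonneg_right hc hm, sq_nonneg (α - 4)]

/-- on [3,5], `pstar α ≤ 2.115`. -/
lemma claimA {α : ℝ} (h3 : 3 ≤ α) (h5 : α ≤ 5) : pstar α ≤ 423 / 200 := by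
  have hd := den_pos (by linarith : (1:ℝ) ≤ α)
  rw [pstar, div_le_iff₀ hd]
  have := claimA_aux h3 h5
  nlinarith

/-- on [1,2], `pstar α ≤ 2`. -/
lemma claimB {α : ℝ} (h1 : 1 ≤ α) (h2 : α ≤ 2) : pstar α ≤ 2 := by
  have hd := den_pos h1
  rw [pstar, div_le_iff₀ hd]
  have hc := chord_bound h1 h2 (by norm_num : (1:ℝ) < 2)
  rw [rp_two, Real.rpow_one] at hc
  nlinarith [sq_nonneg (α - 2), two_rpow_pos α]

/-- on [2,3], `pstar α < 2.2`. -/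
lemma claimC {α : ℝ} (h2 : 2 ≤ α) (h3 : α ≤ 3) : pstar α < 2.2 := by
  have hd := den_pos (by linarith : (1:ℝ) ≤ α)
  rw [pstar, div_lt_iff₀ hd]
  have hc := chord_bound h2 h3 (by norm_num : (2:ℝ) < 3)
  rw [rp_two, rp_three] at hc
  -- 2^α ≤ 4α - 4 ; need 2^α(26-6α) < 42+10α (×5)
  nlinarith [mul_le_mul_of_nonneg_right (show (2:ℝ)^α ≤ 4*α - 4 by nlinarith)
    (show (0:ℝ) ≤ 26 - 6*α by linarith), sq_nonneg (6*α - 14.75)]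

/-- α ≥ 5 ⇒ `pstar α ≤ 2`. -/
lemma claimD {α : ℝ} (h : 5 ≤ α) : pstar α ≤ 2 := by
  have hd := den_pos (by linarith : (1:ℝ) ≤ α)
  rw [pstar, div_le_iff₀ hd]
  have hp := two_rpow_pos α
  nlinarith [mul_nonneg hp.le (show (0:ℝ) ≤ α - 5 by linarith)]

lemma pstar_two : pstar 2 = 2 := by
  rw [pstar, rp_two]; norm_num

lemma pstar_275 : (423:ℝ) / 200 < pstar 2.75 := by
  have hd := den_pos (by norm_num : (1:ℝ) ≤ 2.75)
  rw [pstar, lt_div_iff₀ hd]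
  have := b275
  nlinarith

theorem stmt6 :
    ∃ αstar : ℝ, 2 < αstar ∧ αstar < 3 ∧
      (∀ α : ℝ, 1 ≤ α → pstar α ≤ pstar αstar) ∧ pstar αstar < 2.2 := by
  have h2exp : Continuous fun α : ℝ => (2:ℝ) ^ α := by
    have : (fun α : ℝ => (2:ℝ) ^ α) = fun α => Real.exp (Real.log 2 * α) :=
      funext fun α => rpow_def_of_pos two_pos α
    rw [this]; exact Real.continuous_exp.comp (continuous_const.mul continuous_id)
  have hcont : ContinuousOn pstar (Set.Icc 1 5) := by
    apply ContinuousOn.div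
    · exact (((h2exp.mul (by continuity)).sub continuous_const).sub (by continuity)).continuousOn
    · exact (continuous_const.add (h2exp.mul (by continuity))).continuousOn
    · exact fun x hx => (den_pos hx.1).ne'
  obtain ⟨αstar, hmem, hmax⟩ := isCompact_Icc.exists_isMaxOn
    (⟨1, by norm_num⟩ : (Set.Icc (1:ℝ) 5).Nonempty) hcont
  have hmax' : ∀ α ∈ Set.Icc (1:ℝ) 5, pstar α ≤ pstar αstar := fun α hα => hmax hα
  have hlow : (423:ℝ) / 200 < pstar αstar :=
    lt_of_lt_of_le pstar_275 (hmax' 2.75 (by norm_num))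
  have hm1 := hmem.1
  have hm5 := hmem.2
  have hgt2 : 2 < αstar := by
    by_contra h
    push_neg at h
    have := claimB hm1 h
    linarith
  have hlt3 : αstar < 3 := by
    by_contra h
    push_neg at h
    have := claimA h hm5
    linarith
  refine ⟨αstar, hgt2, hlt3, ?_, claimC hgt2.le hlt3.le⟩
  intro α hα
  rcases le_total α 5 with h | h
  · exact hmax' α ⟨hα, h⟩
  · calc pstar α ≤ 2 := claimD h
      _ = pstar 2 := pstar_two.symm
      _ ≤ pstar αstar := hmax' 2 (by norm_num)
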